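/- Let N ≥ 1, let k be such that k + 1 ≤ N, and let p be a real number with p > 1/(k+1). Then the linear map Λ_p : M_N(ℂ) → M_N(ℂ) defined by Λ_p(X) = Tr(X)·I − p·X is not (k+1)-positive; that is, there exists a unit vector ψ ∈ ℂ^N ⊗ ℂ^N of Schmidt rank at most k+1 such that (1 ⊗ Λ_p)(|ψ⟩⟨ψ|) is not positive semidefinite. -/

import Mathlib

open Matrix BigOperators
open scoped ComplexOrder

/-- The `n × n` matrix `M_ψ` associated to a vector `ψ ∈ ℂ^α ⊗ ℂ^β`,
with entries `(M_ψ)_{ij} = ⟨e_i ⊗ e_j, ψ⟩ = ψ (i, j)`. -/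
def matOfVec {α β : Type*} (ψ : α × β → ℂ) : Matrix α β ℂ :=
  Matrix.of fun i j => ψ (i, j)

/-- The Schmidt rank of a bipartite vector is the rank of its associated matrix. -/
noncomputable def schmidtRank {α β : Type*} [Fintype β] (ψ : α × β → ℂ) : ℕ :=
  (matOfVec ψ).rank

/-- `ψ` is a unit vector. -/
def IsUnitVec {γ : Type*} [Fintype γ] (ψ : γ → ℂ) : Prop :=
  ∑ x, Complex.normSq (ψ x) = 1

/-- The outer product `|ψ⟩⟨ψ|`. -/
def outer {γ : Type*} (ψ : γ → ℂ) : Matrix γ γ ℂ :=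
  Matrix.of fun x y => ψ x * star (ψ y)

/-- `ρ ∈ S_k`: `ρ` admits a decomposition `ρ = ∑ i, p i • |ψ i⟩⟨ψ i|` with `p i ≥ 0`,
`∑ i, p i = 1`, each `ψ i` a unit vector of Schmidt rank at most `k`. -/
def InSchmidtClass {α : Type*} [Fintype α] (k : ℕ)
    (ρ : Matrix (α × α) (α × α) ℂ) : Prop :=
  ∃ (m : ℕ) (p : Fin m → ℝ) (ψ : Fin m → α × α → ℂ),
    (∀ i, 0 ≤ p i) ∧ (∑ i, p i) = 1 ∧
    (∀ i, IsUnitVec (ψ i)) ∧ (∀ i, schmidtRank (ψ i) ≤ k) ∧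
    ρ = ∑ i, (p i : ℂ) • outer (ψ i)

/-- The map `1 ⊗ Λ`, applying `Λ` to each block of a matrix indexed by `γ × Fin n`. -/
def blockMap {γ : Type*} {n m : ℕ}
    (Λ : Matrix (Fin n) (Fin n) ℂ → Matrix (Fin m) (Fin m) ℂ)
    (X : Matrix (γ × Fin n) (γ × Fin n) ℂ) : Matrix (γ × Fin m) (γ × Fin m) ℂ :=
  Matrix.of fun a b => Λ (Matrix.of fun s t => X (a.1, s) (b.1, t)) a.2 b.2

/-- `Λ` is Hermiticity-preserving: `Λ(X†) = Λ(X)†`. -/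
def HermPreserving {n m : ℕ}
    (Λ : Matrix (Fin n) (Fin n) ℂ → Matrix (Fin m) (Fin m) ℂ) : Prop :=
  ∀ X, Λ Xᴴ = (Λ X)ᴴ

/-- `Λ` is `k`-positive: `(1 ⊗ Λ)(|ψ⟩⟨ψ|)` is positive semidefinite for every
unit vector `ψ ∈ ℂ^N ⊗ ℂ^N` of Schmidt rank at most `k`. -/
def kPositive {N : ℕ} (k : ℕ)
    (Λ : Matrix (Fin N) (Fin N) ℂ → Matrix (Fin N) (Fin N) ℂ) : Prop :=
  ∀ ψ : Fin N × Fin N → ℂ, IsUnitVec ψ → schmidtRank ψ ≤ k →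
    (blockMap Λ (outer ψ)).PosSemidef

namespace Stmt8Aux

variable {N k : ℕ}

/-- scaling constant -/
noncomputable def cc (k : ℕ) : ℝ := (Real.sqrt ((k:ℝ)+1))⁻¹

noncomputable def dv (N k : ℕ) : Fin N → ℂ :=
  fun i => if (i : ℕ) < k+1 then ((cc k : ℝ) : ℂ) else 0

noncomputable def ψv (N k : ℕ) : Fin N × Fin N → ℂ :=
  fun x => if x.1 = x.2 then dv N k x.1 else 0

lemma cc_pos (k : ℕ) : 0 < cc k := by
  unfold cc
  positivity

lemma cc_sq (k : ℕ) : (cc k)^2 = ((k:ℝ)+1)⁻¹ := by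
  unfold cc
  rw [← Real.sqrt_inv]
  exact Real.sq_sqrt (by positivity)

lemma filter_card (hkN : k + 1 ≤ N) :
    (Finset.univ.filter (fun i : Fin N => (i:ℕ) < k+1)).card = k+1 := by
  have h : (Finset.univ.filter (fun i : Fin N => (i:ℕ) < k+1))
      = (Finset.univ : Finset (Fin (k+1))).map
          ⟨Fin.castLE hkN, Fin.castLE_injective hkN⟩ := by
    ext i
    simp only [Finset.mem_filter, Finset.mem_univ, true_and, Finset.mem_map,
      Function.Embedding.coeFn_mk]
    constructor
    · intro h
      exact ⟨⟨(i:ℕ), h⟩, by ext; simp [Fin.castLE]⟩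
    · rintro ⟨j, rfl⟩
      exact j.isLt
  rw [h, Finset.card_map, Finset.card_univ, Fintype.card_fin]

lemma sum_ite_const (hkN : k + 1 ≤ N) (r : ℂ) :
    ∑ i : Fin N, (if (i:ℕ) < k+1 then r else 0) = ((k:ℂ)+1) * r := by
  rw [← Finset.sum_filter, Finset.sum_const, filter_card hkN, nsmul_eq_mul]
  push_cast
  ring

lemma isUnit_ψv (hkN : k + 1 ≤ N) : ∑ x, Complex.normSq (ψv N k x) = 1 := by
  rw [Fintype.sum_prod_type]
  have h1 : ∀ i : Fin N, ∑ j, Complex.normSq (ψv N k (i,j))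
      = if (i:ℕ) < k+1 then (cc k)^2 else 0 := by
    intro i
    have h2 : ∀ j, Complex.normSq (ψv N k (i,j))
        = if i = j then (if (i:ℕ) < k+1 then (cc k)^2 else 0) else 0 := by
      intro j
      unfold ψv dv
      split_ifs <;> simp_all [Complex.normSq_ofReal, sq]
    simp [h2]
  simp only [h1]
  have := cc_sq k
  rw [← Finset.sum_filter, Finset.sum_const, filter_card hkN, nsmul_eq_mul, this]
  push_cast
  field_simp

lemma sum_mul_star (hkN : k + 1 ≤ N) :
    ∑ x, ψv N k x * star (ψv N k x) = 1 := by
  have := isUnit_ψv (N := N) (k := k) hkN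
  have h : ∀ x, ψv N k x * star (ψv N k x) = (Complex.normSq (ψv N k x) : ℂ) := by
    intro x; rw [Complex.star_def, Complex.mul_conj]
  simp only [h]
  rw [← Complex.ofReal_sum, this, Complex.ofReal_one]

lemma sum_star_mul (hkN : k + 1 ≤ N) :
    ∑ x, star (ψv N k x) * ψv N k x = 1 := by
  have := sum_mul_star (N := N) (k := k) hkN
  simpa [mul_comm] using this

/-- block trace -/
lemma block_trace (i j : Fin N) :
    ∑ u, ψv N k (i,u) * star (ψv N k (j,u))
      = if i = j ∧ (i:ℕ) < k+1 then (((cc k : ℝ) : ℂ))^2 else 0 := by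
  rcases eq_or_ne i j with rfl | hij
  · have h : ∀ u, ψv N k (i,u) * star (ψv N k (i,u))
        = if i = u then (if (i:ℕ) < k+1 then (((cc k : ℝ):ℂ))^2 else 0) else 0 := by
      intro u
      unfold ψv dv
      split_ifs <;> simp_all [sq, Complex.ext_iff]
    simp only [h]
    simp
  · rw [if_neg (by simp [hij])]
    refine Finset.sum_eq_zero fun u _ => ?_
    unfold ψv dv
    rcases eq_or_ne i u with rfl | hiu
    · simp [hij.symm]
    · simp [hiu]

end Stmt8Aux

namespace Stmt8Aux

variable {N k : ℕ}

lemma entry (p : ℝ) (a b : Fin N × Fin N) :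
    blockMap (fun X : Matrix (Fin N) (Fin N) ℂ =>
        X.trace • (1 : Matrix (Fin N) (Fin N) ℂ) - (p : ℂ) • X) (outer (ψv N k)) a b
    = (if a.1 = b.1 ∧ (a.1:ℕ) < k+1 then (((cc k : ℝ) : ℂ))^2 else 0)
        * (if a.2 = b.2 then 1 else 0)
      - (p:ℂ) * (ψv N k a * star (ψv N k b)) := by
  simp only [blockMap, outer, Matrix.of_apply, Matrix.sub_apply, Matrix.smul_apply,
    Matrix.one_apply, smul_eq_mul, Matrix.trace, Matrix.diag, Matrix.of_apply]
  rw [block_trace a.1 b.1]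

lemma quad (hkN : k + 1 ≤ N) (p : ℝ) :
    star (ψv N k) ⬝ᵥ ((blockMap (fun X : Matrix (Fin N) (Fin N) ℂ =>
        X.trace • (1 : Matrix (Fin N) (Fin N) ℂ) - (p : ℂ) • X) (outer (ψv N k))) *ᵥ ψv N k)
    = ((((k:ℝ)+1)⁻¹ : ℝ) : ℂ) - (p : ℂ) := by
  set ψ := ψv N k with hψ
  set c : ℂ := ((cc k : ℝ) : ℂ) with hcdef
  have hQ : star ψ ⬝ᵥ ((blockMap (fun X : Matrix (Fin N) (Fin N) ℂ =>
        X.trace • (1 : Matrix (Fin N) (Fin N) ℂ) - (p : ℂ) • X) (outer ψ)) *ᵥ ψ)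
      = ∑ a, star (ψ a) *
          ∑ b, ((if a.1 = b.1 ∧ (a.1:ℕ) < k+1 then c^2 else 0)
              * (if a.2 = b.2 then 1 else 0)
            - (p:ℂ) * (ψ a * star (ψ b))) * ψ b := by
    simp only [dotProduct, mulVec, Pi.star_apply]
    refine Finset.sum_congr rfl fun a _ => ?_
    congr 1
    refine Finset.sum_congr rfl fun b _ => ?_
    rw [entry p a b]
  rw [hQ]
  have hA : ∀ a : Fin N × Fin N,
      (∑ b, ((if a.1 = b.1 ∧ (a.1:ℕ) < k+1 then c^2 else 0)
          * (if a.2 = b.2 then 1 else 0)) * ψ b)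
      = (if (a.1:ℕ) < k+1 then c^2 else 0) * ψ a := by
    intro a
    rw [Fintype.sum_prod_type]
    simp [ite_and, mul_ite, ite_mul, Finset.sum_ite_eq, Finset.sum_ite_eq']
  have hB : ∀ a : Fin N × Fin N,
      (∑ b, ((p:ℂ) * (ψ a * star (ψ b))) * ψ b) = (p:ℂ) * ψ a := by
    intro a
    have : (∑ b, ((p:ℂ) * (ψ a * star (ψ b))) * ψ b)
        = (p:ℂ) * ψ a * ∑ b, star (ψ b) * ψ b := by
      rw [Finset.mul_sum]; exact Finset.sum_congr rfl fun b _ => by ring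
    rw [this, hψ, sum_star_mul hkN, mul_one]
  have hsplit : ∀ a : Fin N × Fin N,
      star (ψ a) * ∑ b, ((if a.1 = b.1 ∧ (a.1:ℕ) < k+1 then c^2 else 0)
              * (if a.2 = b.2 then 1 else 0)
            - (p:ℂ) * (ψ a * star (ψ b))) * ψ b
      = star (ψ a) * ((if (a.1:ℕ) < k+1 then c^2 else 0) * ψ a) - star (ψ a) * ((p:ℂ) * ψ a) := by
    intro a
    rw [← mul_sub]
    congr 1
    rw [← hA a, ← hB a, ← Finset.sum_sub_distrib]
    exact Finset.sum_congr rfl fun b _ => by ring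
  simp only [hsplit]
  rw [Finset.sum_sub_distrib]
  have hA2 : (∑ a : Fin N × Fin N, star (ψ a) * ((if (a.1:ℕ) < k+1 then c^2 else 0) * ψ a))
      = ((((k:ℝ)+1)⁻¹ : ℝ) : ℂ) := by
    rw [Fintype.sum_prod_type]
    have h1 : ∀ i s : Fin N, star (ψ (i,s)) * ((if (i:ℕ) < k+1 then c^2 else 0) * ψ (i,s))
        = if i = s then (if (i:ℕ) < k+1 then c^2 * c^2 else 0) else 0 := by
      intro i s
      have hsc : star c = c := by rw [hcdef]; exact Complex.conj_ofReal _
      rcases eq_or_ne i s with rfl | his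
      · by_cases hik : (i:ℕ) < k+1
        · simp only [hψ, ψv, dv, if_pos hik, eq_self_iff_true, if_true]
          rw [hsc]; ring
        · simp [hψ, ψv, dv, hik]
      · simp [hψ, ψv, dv, his]
    simp only [h1]
    simp only [Finset.sum_ite_eq, Finset.mem_univ, if_true]
    rw [sum_ite_const hkN]
    have := cc_sq k
    rw [hcdef]
    push_cast
    rw [show ((cc k : ℂ))^2 = (((cc k)^2 : ℝ) : ℂ) by push_cast; ring, this]
    push_cast
    have hne : ((k:ℂ)+1) ≠ 0 := by
      intro h
      have : ((k:ℝ)+1) = 0 := by exact_mod_cast congrArg Complex.re h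
      nlinarith [Nat.cast_nonneg (α := ℝ) k]
    field_simp
  have hB2 : (∑ a : Fin N × Fin N, star (ψ a) * ((p:ℂ) * ψ a)) = (p:ℂ) := by
    have : (∑ a : Fin N × Fin N, star (ψ a) * ((p:ℂ) * ψ a))
        = (p:ℂ) * ∑ a, star (ψ a) * ψ a := by
      rw [Finset.mul_sum]; exact Finset.sum_congr rfl fun a _ => by ring
    rw [this, hψ, sum_star_mul hkN, mul_one]
  rw [hA2, hB2]

end Stmt8Aux

namespace Stmt8Aux

variable {N k : ℕ}

lemma rank_le (hkN : k + 1 ≤ N) :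
    (Matrix.of fun i j : Fin N => ψv N k (i,j)).rank ≤ k+1 := by
  have h : (Matrix.of fun i j : Fin N => ψv N k (i,j)) = Matrix.diagonal (dv N k) := by
    ext i j
    simp [ψv, Matrix.diagonal_apply]
  rw [h, Matrix.rank_diagonal, Fintype.card_subtype]
  have h2 : (Finset.univ.filter fun i : Fin N => dv N k i ≠ 0)
      = Finset.univ.filter fun i : Fin N => (i:ℕ) < k+1 := by
    refine Finset.filter_congr fun i _ => ?_
    unfold dv
    split_ifs with h3
    · simp only [h3, iff_true]
      exact_mod_cast Complex.ofReal_ne_zero.mpr (cc_pos k).ne'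
    · simp [h3]
  rw [h2, filter_card hkN]

theorem main (hkN : k + 1 ≤ N) (p : ℝ) (hp : 1 / ((k : ℝ) + 1) < p) :
    ¬ (blockMap (fun X : Matrix (Fin N) (Fin N) ℂ =>
        X.trace • (1 : Matrix (Fin N) (Fin N) ℂ) - (p : ℂ) • X) (outer (ψv N k))).PosSemidef := by
  intro hPS
  have h2 := hPS.dotProduct_mulVec_nonneg (ψv N k)
  rw [quad hkN p] at h2
  have h3 : (0:ℂ) ≤ (((((k:ℝ)+1)⁻¹ - p) : ℝ) : ℂ) := by push_cast at h2 ⊢; exact h2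
  rw [Complex.zero_le_real] at h3
  rw [one_div] at hp
  linarith

end Stmt8Aux


/-- For `k + 1 ≤ N` and `p > 1/(k+1)`, the map `Λ_p(X) = Tr(X)·I − p·X` on
`M_N(ℂ)` is not `(k+1)`-positive: some unit vector `ψ` of Schmidt rank at most `k+1` has
`(1 ⊗ Λ_p)(|ψ⟩⟨ψ|)` not positive semidefinite. -/

theorem lambda_p_not_succ_kPositive {N k : ℕ} (hN : 1 ≤ N) (hkN : k + 1 ≤ N)
    (p : ℝ) (hp : 1 / ((k : ℝ) + 1) < p) :
    ∃ ψ : Fin N × Fin N → ℂ, IsUnitVec ψ ∧ schmidtRank ψ ≤ k + 1 ∧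
      ¬ (blockMap (fun X : Matrix (Fin N) (Fin N) ℂ =>
          X.trace • (1 : Matrix (Fin N) (Fin N) ℂ) - (p : ℂ) • X) (outer ψ)).PosSemidef := by
  refine ⟨Stmt8Aux.ψv N k, Stmt8Aux.isUnit_ψv hkN, ?_, Stmt8Aux.main hkN p hp⟩
  unfold schmidtRank matOfVec
  exact Stmt8Aux.rank_le hkN
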